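/- Let p be an odd prime and α an integer not divisible by p. Let G : ℍ → ℂ satisfy the ε-condition: for every integer m with either p | m or χ_p(−m) ≠ χ_p(α), one has ∑_{j=0}^{p-1} e(−jm/p)·G(τ + j/p) = 0 for all τ ∈ ℍ. Define G_γ(τ) := (1/(2p))·∑_{j=0}^{p-1} e(jαγ̃²/p)·G(τ + j/p) for γ ∈ ℤ/pℤ. Then ∑_{γ=1}^{p-1} G_γ(τ) = G(τ) for all τ ∈ ℍ. (This says that a form satisfying the ε-condition is the sum of its components G_γ over γ ∈ (ℤ/pℤ)^×.) -/

import Mathlib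

open Complex Finset

/-- `e(x) = exp(2πix)`. -/
noncomputable def e (x : ℂ) : ℂ := Complex.exp (2 * (Real.pi : ℂ) * Complex.I * x)

/-- The component `G_γ(τ) = (1/(2p)) ∑_{j=0}^{p-1} e(jαγ̃²/p) G(τ + j/p)`. -/
noncomputable def component (p : ℕ) (α : ℤ) (G : ℂ → ℂ) (γ : ZMod p) : ℂ → ℂ := fun τ =>
  (1 / (2 * p)) * ∑ j ∈ Finset.range p,
    e ((j : ℂ) * (α : ℂ) * (γ.val : ℂ) ^ 2 / p) * G (τ + (j : ℂ) / p)

lemma e_add_int (x : ℂ) (k : ℤ) : e (x + k) = e x := by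
  unfold e
  rw [mul_add, Complex.exp_add,
    show 2 * (Real.pi : ℂ) * Complex.I * (k : ℂ) = (k : ℂ) * (2 * Real.pi * Complex.I) by ring,
    Complex.exp_int_mul_two_pi_mul_I, mul_one]

lemma e_congr (p : ℕ) [NeZero p] (j : ℕ) (a b : ℤ) (h : (a : ZMod p) = (b : ZMod p)) :
    e ((j : ℂ) * (a : ℂ) / p) = e ((j : ℂ) * (b : ℂ) / p) := by
  obtain ⟨t, ht⟩ := ((ZMod.intCast_eq_intCast_iff a b p).mp h).dvd
  have hp : (p : ℂ) ≠ 0 := Nat.cast_ne_zero.mpr (NeZero.ne p)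
  have hC : (b : ℂ) = (a : ℂ) + (p : ℂ) * (t : ℂ) := by
    have := congrArg (Int.cast : ℤ → ℂ) ht
    push_cast at this
    linear_combination this
  have : (j : ℂ) * (b : ℂ) / p = (j : ℂ) * (a : ℂ) / p + ((j * t : ℤ) : ℂ) := by
    push_cast
    field_simp
    linear_combination (j : ℂ) * hC
  rw [this, e_add_int]

lemma sum_e_range (p : ℕ) [NeZero p] (j : ℕ) (hj : j < p) :
    ∑ k ∈ Finset.range p, e ((j : ℂ) * k / p) = if j = 0 then (p : ℂ) else 0 := by
  have hp : (p : ℂ) ≠ 0 := Nat.cast_ne_zero.mpr (NeZero.ne p)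
  rcases eq_or_ne j 0 with rfl | hj0
  · simp [e]
  · rw [if_neg hj0]
    have hx : ∀ k : ℕ, e ((j : ℂ) * k / p) = (e ((j : ℂ) / p)) ^ k := by
      intro k
      unfold e
      rw [← Complex.exp_nat_mul]
      ring_nf
    simp_rw [hx]
    have hne : e ((j : ℂ) / p) ≠ 1 := by
      intro h
      unfold e at h
      rw [Complex.exp_eq_one_iff] at h
      obtain ⟨n, hn⟩ := h
      have h2 : (2 * (Real.pi : ℂ) * Complex.I) ≠ 0 := by
        simp [Real.pi_ne_zero, Complex.I_ne_zero]
      field_simp at hn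
      have hj' : (j : ℂ) = (n : ℂ) * p :=
        mul_left_cancel₀ h2 (by linear_combination (2 * (Real.pi : ℂ) * Complex.I) * hn)
      have hjz : (j : ℤ) = n * p := by exact_mod_cast hj'
      have hdvd : (p : ℤ) ∣ (j : ℤ) := ⟨n, by linarith [hjz]⟩
      have := Int.le_of_dvd (by exact_mod_cast Nat.pos_of_ne_zero hj0) hdvd
      omega
    rw [geom_sum_eq hne]
    have hxp : (e ((j : ℂ) / p)) ^ p = 1 := by
      unfold e
      rw [← Complex.exp_nat_mul,
        show (p : ℂ) * (2 * (Real.pi : ℂ) * Complex.I * ((j : ℂ) / p)) =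
          (j : ℂ) * (2 * Real.pi * Complex.I) by field_simp]
      exact_mod_cast Complex.exp_int_mul_two_pi_mul_I j
    rw [hxp]
    simp

theorem sum_of_components_of_epsilon_form (p : ℕ) [Fact p.Prime] (hp2 : p ≠ 2)
    (α : ℤ) (hα : ¬ (p : ℤ) ∣ α) (G : ℂ → ℂ)
    (hε : ∀ m : ℤ, ((p : ℤ) ∣ m ∨ legendreSym p (-m) ≠ legendreSym p α) →
      ∀ τ : ℂ, 0 < τ.im →
        ∑ j ∈ Finset.range p, e (-((j : ℂ) * (m : ℂ) / p)) * G (τ + (j : ℂ) / p) = 0) :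
    ∀ τ : ℂ, 0 < τ.im →
      ∑ γ ∈ Finset.Icc 1 (p - 1), component p α G (γ : ZMod p) τ = G τ := by
  intro τ hτ
  have hp : p.Prime := Fact.out
  haveI : NeZero p := ⟨hp.ne_zero⟩
  have hpC : (p : ℂ) ≠ 0 := Nat.cast_ne_zero.mpr hp.ne_zero
  have hα' : (α : ZMod p) ≠ 0 := fun h => hα ((ZMod.intCast_zmod_eq_zero_iff_dvd α p).mp h)
  set F : ZMod p → ℂ := fun n =>
    ∑ j ∈ Finset.range p, e ((j : ℂ) * (n.val : ℂ) / p) * G (τ + (j : ℂ) / p) with hFdef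
  -- legendreSym of the value equals quadraticChar
  have hleg : ∀ n : ZMod p, legendreSym p (n.val : ℤ) = quadraticChar (ZMod p) n := by
    intro n
    rw [legendreSym]
    congr 1
    push_cast
    simp [ZMod.natCast_val, ZMod.cast_id]
  have hlegα : legendreSym p α = quadraticChar (ZMod p) (α : ZMod p) := rfl
  -- F vanishes off the α-square class
  have hF0 : ∀ n : ZMod p, legendreSym p (n.val : ℤ) ≠ legendreSym p α → F n = 0 := by
    intro n hn
    have h := hε (-(n.val : ℤ)) (Or.inr (by rwa [neg_neg])) τ hτ
    rw [← h]
    refine Finset.sum_congr rfl fun j _ => ?_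
    congr 2
    push_cast
    ring
  -- total sum of F over all residues
  have hsum : ∑ n : ZMod p, F n = (p : ℂ) * G τ := by
    rw [hFdef, Finset.sum_comm]
    have hinner : ∀ j ∈ Finset.range p,
        (∑ n : ZMod p, e ((j : ℂ) * (n.val : ℂ) / p) * G (τ + (j : ℂ) / p))
        = (if j = 0 then (p : ℂ) else 0) * G (τ + (j : ℂ) / p) := by
      intro j hj
      rw [← Finset.sum_mul]
      congr 1
      rw [← sum_e_range p j (Finset.mem_range.mp hj)]
      refine Finset.sum_nbij' (fun n => n.val) (fun k => (k : ZMod p)) ?_ ?_ ?_ ?_ ?_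
      · exact fun n _ => Finset.mem_range.mpr n.val_lt
      · exact fun k _ => Finset.mem_univ _
      · exact fun n _ => ZMod.natCast_rightInverse n
      · exact fun k hk => ZMod.val_cast_of_lt (Finset.mem_range.mp hk)
      · exact fun n _ => rfl
    rw [Finset.sum_congr rfl hinner]
    rw [Finset.sum_eq_single 0 (fun b _ hb => by rw [if_neg hb, zero_mul])
      (fun h => absurd (Finset.mem_range.mpr hp.pos) h)]
    simp
  -- components in terms of F
  have hcomp : ∀ u : ZMod p, component p α G u τ
      = (1 / (2 * (p : ℂ))) * F ((α : ZMod p) * u ^ 2) := by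
    intro u
    unfold component
    congr 1
    refine Finset.sum_congr rfl fun j _ => ?_
    congr 1
    have h1 : e ((j : ℂ) * (α : ℂ) * (u.val : ℂ) ^ 2 / p)
        = e ((j : ℂ) * (((α * (u.val : ℤ) ^ 2 : ℤ)) : ℂ) / p) := by
      push_cast
      ring_nf
    have h2 := e_congr p j (α * (u.val : ℤ) ^ 2) ((((α : ZMod p) * u ^ 2).val : ℤ))
      (by push_cast; simp [ZMod.natCast_val, ZMod.cast_id])
    rw [h1, h2]
    push_cast
    ring_nf
  set Q : Finset (ZMod p) :=
    Finset.univ.filter (fun n => legendreSym p (n.val : ℤ) = legendreSym p α) with hQdef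
  -- maps-to
  have hmaps : ∀ u ∈ Finset.univ.erase (0 : ZMod p), (α : ZMod p) * u ^ 2 ∈ Q := by
    intro u hu
    have hu0 : u ≠ 0 := (Finset.mem_erase.mp hu).1
    rw [hQdef, Finset.mem_filter]
    refine ⟨Finset.mem_univ _, ?_⟩
    rw [hleg, hlegα, map_mul, quadraticChar_sq_one' hu0, mul_one]
  -- fiberwise sum
  have hfib : ∑ u ∈ Finset.univ.erase (0 : ZMod p), F ((α : ZMod p) * u ^ 2)
      = ∑ n ∈ Q, 2 * F n := by
    rw [← Finset.sum_fiberwise_of_maps_to hmaps]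
    refine Finset.sum_congr rfl fun n hn => ?_
    -- find a square root
    have hn' := (Finset.mem_filter.mp hn).2
    have hχ : quadraticChar (ZMod p) n = quadraticChar (ZMod p) (α : ZMod p) := by
      rw [← hleg, ← hlegα]; exact hn'
    have hn0 : n ≠ 0 := by
      intro h
      rw [h, quadraticChar_zero] at hχ
      rcases quadraticChar_dichotomy hα' with h' | h' <;> omega
    have hnα : (n * (α : ZMod p)) ≠ 0 := mul_ne_zero hn0 hα'
    have hsq : IsSquare (n * (α : ZMod p)) := by
      rw [← quadraticChar_one_iff_isSquare hnα, map_mul, hχ, ← pow_two]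
      exact quadraticChar_sq_one hα'
    obtain ⟨s', hs'⟩ := hsq
    have hs'0 : s' ≠ 0 := by
      intro h
      rw [h, mul_zero] at hs'
      exact hnα hs'
    set s : ZMod p := s' * (α : ZMod p)⁻¹ with hsdef
    have hs0 : s ≠ 0 := mul_ne_zero hs'0 (inv_ne_zero hα')
    have hsn : (α : ZMod p) * s ^ 2 = n := by
      rw [hsdef]
      field_simp
      linear_combination -hs'
    have hsne : s ≠ -s := by
      intro h
      have h2 : (2 : ZMod p) * s = 0 := by linear_combination h
      rcases mul_eq_zero.mp h2 with h2' | h2'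
      · have : (p : ℕ) ∣ 2 := by
          have := (ZMod.natCast_eq_zero_iff 2 p).mp (by exact_mod_cast h2')
          exact this
        have h2le : p ≤ 2 := Nat.le_of_dvd (by norm_num) this
        have := hp.two_le
        omega
      · exact hs0 h2'
    have hset : (Finset.univ.erase (0 : ZMod p)).filter (fun u => (α : ZMod p) * u ^ 2 = n)
        = {s, -s} := by
      ext u
      simp only [Finset.mem_filter, Finset.mem_erase, Finset.mem_univ, true_and,
        Finset.mem_insert, Finset.mem_singleton, and_true]
      constructor
      · rintro ⟨hu0, hun⟩
        have : u * u = s * s := by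
          have := mul_left_cancel₀ hα' (hun.trans hsn.symm)
          linear_combination this
        exact mul_self_eq_mul_self_iff.mp this
      · rintro (rfl | rfl)
        · exact ⟨hs0, hsn⟩
        · exact ⟨neg_ne_zero.mpr hs0, by rw [neg_pow]; simpa using hsn⟩
    have hval : ∀ u ∈ (Finset.univ.erase (0 : ZMod p)).filter
        (fun u => (α : ZMod p) * u ^ 2 = n), F ((α : ZMod p) * u ^ 2) = F n := by
      intro u hu
      rw [(Finset.mem_filter.mp hu).2]
    rw [Finset.sum_congr rfl hval, Finset.sum_const, hset,
      Finset.card_insert_of_notMem (by simpa using hsne), Finset.card_singleton]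
    push_cast
    ring
  -- sum over Q is the full sum
  have hQsum : ∑ n ∈ Q, F n = ∑ n : ZMod p, F n := by
    refine Finset.sum_subset (Finset.subset_univ _) fun n _ hn => ?_
    refine hF0 n ?_
    intro h
    exact hn (Finset.mem_filter.mpr ⟨Finset.mem_univ _, h⟩)
  -- bijection between Icc 1 (p-1) and the nonzero residues
  have hIcc : ∑ γ ∈ Finset.Icc 1 (p - 1), F ((α : ZMod p) * (γ : ZMod p) ^ 2)
      = ∑ u ∈ Finset.univ.erase (0 : ZMod p), F ((α : ZMod p) * u ^ 2) := by
    refine Finset.sum_nbij' (fun γ => (γ : ZMod p)) (fun u => u.val) ?_ ?_ ?_ ?_ ?_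
    · intro γ hγ
      obtain ⟨h1, h2⟩ := Finset.mem_Icc.mp hγ
      have hlt : γ < p := by omega
      refine Finset.mem_erase.mpr ⟨?_, Finset.mem_univ _⟩
      intro h
      have := ZMod.val_cast_of_lt hlt
      rw [show ((γ : ℕ) : ZMod p) = 0 from h, ZMod.val_zero] at this
      omega
    · intro u hu
      have hu0 : u ≠ 0 := (Finset.mem_erase.mp hu).1
      refine Finset.mem_Icc.mpr ⟨?_, ?_⟩
      · show 1 ≤ u.val
        have : u.val ≠ 0 := fun h => hu0 ((ZMod.val_eq_zero u).mp h)
        omega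
      · show u.val ≤ p - 1
        have := u.val_lt
        omega
    · intro γ hγ
      obtain ⟨h1, h2⟩ := Finset.mem_Icc.mp hγ
      exact ZMod.val_cast_of_lt (by omega)
    · exact fun u _ => ZMod.natCast_rightInverse u
    · exact fun γ _ => rfl
  calc ∑ γ ∈ Finset.Icc 1 (p - 1), component p α G (γ : ZMod p) τ
      = ∑ γ ∈ Finset.Icc 1 (p - 1), (1 / (2 * (p : ℂ))) * F ((α : ZMod p) * (γ : ZMod p) ^ 2) := by
        exact Finset.sum_congr rfl fun γ _ => hcomp _
    _ = (1 / (2 * (p : ℂ))) * ∑ u ∈ Finset.univ.erase (0 : ZMod p),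
          F ((α : ZMod p) * u ^ 2) := by rw [← Finset.mul_sum, hIcc]
    _ = (1 / (2 * (p : ℂ))) * (2 * ((p : ℂ) * G τ)) := by
        rw [hfib, ← Finset.mul_sum, hQsum, hsum]
    _ = G τ := by
        field_simp
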